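/- Let h > 0 and let f : ℝ≥0 → ℝ be continuous with f(0) = 0. Then the two-sided Skorohod reflections of f and of its one-sided reflection Γ⁰(f) on [0,h] coincide: Λ_{0,h}(f) = Λ_{0,h}(Γ⁰(f)), and the upper compensators agree: cʰ(Γ⁰(f)) = cʰ(f). -/

import Mathlib

open Set
open scoped NNReal ENNReal

/-- Solution data for the two-sided Skorohod reflection problem of `f` on `[0,h]`:
`c0` and `ch` are the compensators at `0` and at `h`,
and `fun t => f t + ch t + c0 t` is the reflected path `Λ_{0,h}(f)`.
The support conditions on the measures `dc⁰` and `d(−cʰ)` are phrased as: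
the compensator is constant on every (closed) interval on which the reflected
path avoids the corresponding boundary. -/
structure SkorohodPair (h : ℝ) (f c0 ch : ℝ≥0 → ℝ) : Prop where
  cont0 : Continuous c0
  conth : Continuous ch
  init0 : c0 0 = 0
  inith : ch 0 = 0
  mem_Icc : ∀ t, f t + ch t + c0 t ∈ Set.Icc (0 : ℝ) h
  mono0 : Monotone c0
  antih : Antitone ch
  flat0 : ∀ a b : ℝ≥0, a ≤ b → (∀ t ∈ Set.Icc a b, f t + ch t + c0 t ≠ 0) → c0 b = c0 a
  flath : ∀ a b : ℝ≥0, a ≤ b → (∀ t ∈ Set.Icc a b, f t + ch t + c0 t ≠ h) → ch b = ch a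

/-- The one-sided Skorohod reflection of `f` at level `0` (upward push):
`Γ⁰(f)(t) = f t − min (inf_{[0,t]} f) 0`. -/
noncomputable def gammaUp (f : ℝ≥0 → ℝ) (t : ℝ≥0) : ℝ :=
  f t - min (sInf (f '' Set.Icc 0 t)) 0

namespace SkorohodAux

open scoped Topology

noncomputable def runInf (f : ℝ≥0 → ℝ) (t : ℝ≥0) : ℝ := sInf (f '' Set.Icc 0 t)
noncomputable def mlow (f : ℝ≥0 → ℝ) (t : ℝ≥0) : ℝ := min (runInf f t) 0

lemma gammaUp_eq (f : ℝ≥0 → ℝ) (t : ℝ≥0) : gammaUp f t = f t - mlow f t := rfl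

variable {f : ℝ≥0 → ℝ}

lemma bddBelow_img (hf : Continuous f) (s t : ℝ≥0) : BddBelow (f '' Icc s t) :=
  (isCompact_Icc.image_of_continuousOn hf.continuousOn).bddBelow

lemma runInf_le (hf : Continuous f) {s t : ℝ≥0} (hst : s ≤ t) : runInf f t ≤ f s :=
  csInf_le (bddBelow_img hf 0 t) (mem_image_of_mem f ⟨(zero_le : (0:ℝ≥0) ≤ s), hst⟩)

lemma mlow_nonpos (t : ℝ≥0) : mlow f t ≤ 0 := min_le_right _ _

lemma mlow_le (hf : Continuous f) {s t : ℝ≥0} (hst : s ≤ t) : mlow f t ≤ f s :=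
  le_trans (min_le_left _ _) (runInf_le hf hst)

lemma runInf_anti (hf : Continuous f) : Antitone (runInf f) := by
  intro s t hst
  exact csInf_le_csInf (bddBelow_img hf 0 t)
    ((nonempty_Icc.mpr ((zero_le : (0:ℝ≥0) ≤ s))).image f)
    (image_mono (f := f) (Icc_subset_Icc le_rfl hst))

lemma mlow_anti (hf : Continuous f) : Antitone (mlow f) := fun s t hst =>
  min_le_min (runInf_anti hf hst) le_rfl

lemma mlow_zero (hf0 : f 0 = 0) : mlow f 0 = 0 := by
  have : runInf f 0 = 0 := by
    simp [runInf, Set.Icc_self, hf0]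
  simp [mlow, this]

lemma gammaUp_nonneg (hf : Continuous f) (t : ℝ≥0) : 0 ≤ gammaUp f t := by
  have := mlow_le hf (le_refl t)
  rw [gammaUp_eq]; linarith

lemma gammaUp_zero (hf0 : f 0 = 0) : gammaUp f 0 = 0 := by
  rw [gammaUp_eq, mlow_zero hf0, hf0]; ring

lemma runInf_split (hf : Continuous f) {s t : ℝ≥0} (hst : s ≤ t) :
    runInf f t = min (runInf f s) (sInf (f '' Icc s t)) := by
  have hu : Icc (0:ℝ≥0) s ∪ Icc s t = Icc 0 t := Icc_union_Icc_eq_Icc ((zero_le : (0:ℝ≥0) ≤ s)) hst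
  have : runInf f t = sInf (f '' Icc 0 s ∪ f '' Icc s t) := by
    rw [runInf, ← image_union, hu]
  rw [this, csInf_union (bddBelow_img hf 0 s) ((nonempty_Icc.mpr ((zero_le : (0:ℝ≥0) ≤ s))).image f)
    (bddBelow_img hf s t) ((nonempty_Icc.mpr hst).image f)]
  rfl

lemma runInf_continuous (hf : Continuous f) : Continuous (runInf f) := by
  rw [Metric.continuous_iff]
  intro b ε hε
  obtain ⟨δ, hδ, hball⟩ := Metric.continuous_iff.mp hf b (ε/3) (by positivity)
  refine ⟨δ, hδ, ?_⟩
  intro a ha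
  have key : ∀ u : ℝ≥0, dist u b < δ → |f u - f b| < ε/3 := by
    intro u hu; have := hball u hu; rwa [Real.dist_eq] at this
  rcases le_total a b with hab | hba
  · have hsplit := runInf_split hf hab
    have hmono : runInf f b ≤ runInf f a := runInf_anti hf hab
    have hIb : f b - ε/3 ≤ sInf (f '' Icc a b) := by
      apply le_csInf ((nonempty_Icc.mpr hab).image f)
      rintro x ⟨u, hu, rfl⟩
      have hdu : dist u b < δ := by
        rw [NNReal.dist_eq]
        rw [NNReal.dist_eq] at ha
        have h1 : (u:ℝ) ≤ b := hu.2
        have h2 : (a:ℝ) ≤ u := hu.1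
        rw [abs_sub_comm, abs_of_nonneg (by linarith)]
        rw [abs_sub_comm, abs_of_nonneg (by linarith)] at ha
        linarith
      have := abs_lt.mp (key u hdu)
      linarith
    have hfa : f a ≤ f b + ε/3 := by
      have := abs_lt.mp (key a ha); linarith
    have hra : runInf f a ≤ f a := runInf_le hf le_rfl
    rw [Real.dist_eq, abs_of_nonneg (by linarith)]
    rcases min_cases (runInf f a) (sInf (f '' Icc a b)) with ⟨he, _⟩ | ⟨he, hlt⟩
    · rw [hsplit, he]; linarith
    · rw [hsplit, he]; linarith
  · have hsplit := runInf_split hf hba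
    have hmono : runInf f a ≤ runInf f b := runInf_anti hf hba
    have hIb : f b - ε/3 ≤ sInf (f '' Icc b a) := by
      apply le_csInf ((nonempty_Icc.mpr hba).image f)
      rintro x ⟨u, hu, rfl⟩
      have hdu : dist u b < δ := by
        rw [NNReal.dist_eq]
        rw [NNReal.dist_eq] at ha
        have h1 : (b:ℝ) ≤ u := hu.1
        have h2 : (u:ℝ) ≤ a := hu.2
        rw [abs_of_nonneg (by linarith)]
        rw [abs_of_nonneg (by linarith)] at ha
        linarith
      have := abs_lt.mp (key u hdu)
      linarith
    have hrb : runInf f b ≤ f b := runInf_le hf le_rfl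
    rw [Real.dist_eq, abs_sub_comm, abs_of_nonneg (by linarith)]
    rcases min_cases (runInf f b) (sInf (f '' Icc b a)) with ⟨he, _⟩ | ⟨he, hlt⟩
    · rw [hsplit, he]; linarith
    · rw [hsplit, he]; linarith

lemma mlow_continuous (hf : Continuous f) : Continuous (mlow f) :=
  (runInf_continuous hf).min continuous_const

lemma gammaUp_continuous (hf : Continuous f) : Continuous (gammaUp f) := by
  have : gammaUp f = fun t => f t - mlow f t := rfl
  rw [this]; exact hf.sub (mlow_continuous hf)

lemma exists_gammaUp_zero (hf : Continuous f) {a b : ℝ≥0} (hab : a ≤ b)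
    (hm : mlow f b < mlow f a) : ∃ u, a < u ∧ u ≤ b ∧ gammaUp f u = 0 := by
  obtain ⟨u, hu, humin⟩ := isCompact_Icc.exists_isMinOn (nonempty_Icc.mpr ((zero_le : (0:ℝ≥0) ≤ b)))
    hf.continuousOn
  have hinf : runInf f b = f u := by
    refine IsLeast.csInf_eq ⟨mem_image_of_mem f hu, ?_⟩
    rintro x ⟨v, hv, rfl⟩
    exact humin hv
  have hma : mlow f a ≤ 0 := mlow_nonpos a
  have hfu : f u < 0 := by
    have : min (f u) 0 < 0 := by rw [← hinf]; exact lt_of_lt_of_le hm hma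
    rcases min_cases (f u) (0:ℝ) with ⟨he, _⟩ | ⟨he, _⟩ <;> linarith [this, he]
  have hmb : mlow f b = f u := by
    rw [mlow, hinf]; exact min_eq_left hfu.le
  have hau : a < u := by
    by_contra hc
    push_neg at hc
    have : mlow f a ≤ f u := mlow_le hf hc
    rw [← hmb] at this
    exact absurd hm (not_lt.mpr this)
  refine ⟨u, hau, hu.2, ?_⟩
  have h1 : mlow f u ≤ f u := mlow_le hf le_rfl
  have h2 : mlow f b ≤ mlow f u := mlow_anti hf hu.2
  rw [gammaUp_eq]
  rw [hmb] at h2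
  linarith

lemma last_time {p : ℝ≥0 → Prop} (hp : IsClosed {t | p t}) (t0 : ℝ≥0) (h0 : p 0) :
    ∃ a, a ≤ t0 ∧ p a ∧ ∀ t, a < t → t ≤ t0 → ¬ p t := by
  set S : Set ℝ≥0 := Icc 0 t0 ∩ {t | p t} with hS
  have hne : S.Nonempty := ⟨0, ⟨le_rfl, (zero_le : (0:ℝ≥0) ≤ t0)⟩, h0⟩
  have hbdd : BddAbove S := ⟨t0, fun x hx => hx.1.2⟩
  have hcl : IsClosed S := isClosed_Icc.inter hp
  have hmem := hcl.csSup_mem hne hbdd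
  refine ⟨sSup S, csSup_le hne (fun x hx => hx.1.2), hmem.2, ?_⟩
  intro t hat htt0 hpt
  exact absurd (le_csSup hbdd ⟨⟨(zero_le : (0:ℝ≥0) ≤ t), htt0⟩, hpt⟩) (not_le.mpr hat)

lemma first_time {p : ℝ≥0 → Prop} (hp : IsClosed {t | p t}) (t0 : ℝ≥0) (h0 : p t0) :
    ∃ a, a ≤ t0 ∧ p a ∧ ∀ t, t < a → ¬ p t := by
  set S : Set ℝ≥0 := Icc 0 t0 ∩ {t | p t} with hS
  have hne : S.Nonempty := ⟨t0, ⟨(zero_le : (0:ℝ≥0) ≤ t0), le_rfl⟩, h0⟩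
  have hcl : IsClosed S := isClosed_Icc.inter hp
  have hmem := hcl.csInf_mem hne (OrderBot.bddBelow S)
  refine ⟨sInf S, hmem.1.2, hmem.2, ?_⟩
  intro t hta hpt
  have : t ≤ t0 := le_trans hta.le hmem.1.2
  exact absurd (csInf_le (OrderBot.bddBelow S) ⟨⟨(zero_le : (0:ℝ≥0) ≤ t), this⟩, hpt⟩) (not_le.mpr hta)

lemma eq_of_right_const (F : ℝ≥0 → ℝ) (hF : Continuous F) {a b : ℝ≥0} (hab : a < b)
    (H : ∀ t, a < t → t ≤ b → F t = F b) : F a = F b := by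
  have hne : (𝓝[Ioc a b] a).NeBot := by
    rw [← mem_closure_iff_nhdsWithin_neBot, closure_Ioc hab.ne]
    exact ⟨le_rfl, hab.le⟩
  have h2 : Filter.Tendsto F (𝓝[Ioc a b] a) (𝓝 (F a)) :=
    (hF.tendsto a).mono_left nhdsWithin_le_nhds
  have h3 : Filter.Tendsto F (𝓝[Ioc a b] a) (𝓝 (F b)) := by
    apply Filter.Tendsto.congr' _ (tendsto_const_nhds : Filter.Tendsto (fun _ => F b) _ _)
    filter_upwards [self_mem_nhdsWithin] with t ht
    exact (H t ht.1 ht.2).symm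
  exact tendsto_nhds_unique h2 h3

section Main

variable {h : ℝ} {c0 ch d0 dh : ℝ≥0 → ℝ}

/-- Lemma A: the two-sided reflection of the nonnegative path `gammaUp f` stays below it. -/
lemma dhd0_nonpos (hf : Continuous f) (hf0 : f 0 = 0)
    (hq : SkorohodPair h (gammaUp f) d0 dh) : ∀ t, dh t + d0 t ≤ 0 := by
  intro t0
  by_contra hc
  push_neg at hc
  obtain ⟨a, hat0, hpa, hmax⟩ := last_time
    (p := fun t => dh t + d0 t ≤ 0)
    (isClosed_le (hq.conth.add hq.cont0) continuous_const) t0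
    (by simp [hq.inith, hq.init0])
  have halt : a < t0 := lt_of_le_of_ne hat0 (by rintro rfl; exact absurd hpa (not_le.mpr hc))
  have hd0 : d0 a = d0 t0 := by
    apply eq_of_right_const d0 hq.cont0 halt
    intro t hat htt0
    refine (hq.flat0 t t0 htt0 ?_).symm
    intro u hu
    have h1 := hmax u (lt_of_lt_of_le hat hu.1) hu.2
    push_neg at h1
    have h2 : 0 ≤ gammaUp f u := gammaUp_nonneg hf u
    linarith
  have hdha := hq.antih halt.le
  linarith

/-- The reflected paths of `f` and `gammaUp f` coincide. -/
lemma reflected_eq (hh : 0 < h) (hf : Continuous f) (hf0 : f 0 = 0)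
    (hp : SkorohodPair h f c0 ch) (hq : SkorohodPair h (gammaUp f) d0 dh) :
    ∀ t, f t + ch t + c0 t = gammaUp f t + dh t + d0 t := by
  set X : ℝ≥0 → ℝ := fun t => f t + ch t + c0 t with hX
  set Y : ℝ≥0 → ℝ := fun t => gammaUp f t + dh t + d0 t with hY
  have hXc : Continuous X := (hf.add hp.conth).add hp.cont0
  have hYc : Continuous Y := ((gammaUp_continuous hf).add hq.conth).add hq.cont0
  have hX0 : X 0 = 0 := by simp [hX, hf0, hp.inith, hp.init0]
  have hY0 : Y 0 = 0 := by simp [hY, gammaUp_zero hf0, hq.inith, hq.init0]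
  have hle1 : ∀ t, X t ≤ Y t := by
    intro t0
    by_contra hc
    push_neg at hc
    obtain ⟨a, hat0, hpa, hmax⟩ := last_time (p := fun t => X t ≤ Y t)
      (isClosed_le hXc hYc) t0 (by show X 0 ≤ Y 0; rw [hX0, hY0])
    have halt : a < t0 := lt_of_le_of_ne hat0 (by rintro rfl; exact absurd hpa (not_le.mpr hc))
    have hc0 : c0 a = c0 t0 := by
      apply eq_of_right_const c0 hp.cont0 halt
      intro t hat htt0
      refine (hp.flat0 t t0 htt0 ?_).symm
      intro u hu
      have h1 := hmax u (lt_of_lt_of_le hat hu.1) hu.2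
      push_neg at h1
      have h2 : 0 ≤ Y u := (hq.mem_Icc u).1
      have : (0:ℝ) < X u := lt_of_le_of_lt h2 h1
      exact this.ne'
    have hdh : dh a = dh t0 := by
      apply eq_of_right_const dh hq.conth halt
      intro t hat htt0
      refine (hq.flath t t0 htt0 ?_).symm
      intro u hu
      have h1 := hmax u (lt_of_lt_of_le hat hu.1) hu.2
      push_neg at h1
      have h2 : X u ≤ h := (hp.mem_Icc u).2
      exact ne_of_lt (lt_of_lt_of_le h1 h2)
    have hch : ch t0 ≤ ch a := hp.antih halt.le
    have hm : mlow f t0 ≤ mlow f a := mlow_anti hf halt.le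
    have hd0m : d0 a ≤ d0 t0 := hq.mono0 halt.le
    have hpa' : f a + ch a + c0 a ≤ (f a - mlow f a) + dh a + d0 a := by
      have := hpa
      simp only [hX, hY, gammaUp_eq] at this
      exact this
    have : X t0 ≤ Y t0 := by
      simp only [hX, hY, gammaUp_eq]
      linarith
    linarith
  have hle2 : ∀ t, Y t ≤ X t := by
    intro t0
    by_contra hc
    push_neg at hc
    obtain ⟨a, hat0, hpa, hmax⟩ := last_time (p := fun t => Y t ≤ X t)
      (isClosed_le hYc hXc) t0 (by show Y 0 ≤ X 0; rw [hX0, hY0])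
    have halt : a < t0 := lt_of_le_of_ne hat0 (by rintro rfl; exact absurd hpa (not_le.mpr hc))
    have hd0 : d0 a = d0 t0 := by
      apply eq_of_right_const d0 hq.cont0 halt
      intro t hat htt0
      refine (hq.flat0 t t0 htt0 ?_).symm
      intro u hu
      have h1 := hmax u (lt_of_lt_of_le hat hu.1) hu.2
      push_neg at h1
      have h2 : 0 ≤ X u := (hp.mem_Icc u).1
      have : (0:ℝ) < Y u := lt_of_le_of_lt h2 h1
      exact this.ne'
    have hch : ch a = ch t0 := by
      apply eq_of_right_const ch hp.conth halt
      intro t hat htt0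
      refine (hp.flath t t0 htt0 ?_).symm
      intro u hu
      have h1 := hmax u (lt_of_lt_of_le hat hu.1) hu.2
      push_neg at h1
      have h2 : Y u ≤ h := (hq.mem_Icc u).2
      exact ne_of_lt (lt_of_lt_of_le h1 h2)
    have hmeq : mlow f t0 = mlow f a := by
      rcases eq_or_lt_of_le (mlow_anti hf halt.le) with he | hlt
      · exact he
      · exfalso
        obtain ⟨u, hau, hut0, hgu⟩ := exists_gammaUp_zero hf halt.le hlt
        have hyu : Y u ≤ 0 := by
          have := dhd0_nonpos hf hf0 hq u
          rw [hY]; simp only; rw [hgu]; linarith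
        have hxu : 0 ≤ X u := (hp.mem_Icc u).1
        have h1 := hmax u hau hut0
        push_neg at h1
        linarith
    have hdhm : dh t0 ≤ dh a := hq.antih halt.le
    have hc0m : c0 a ≤ c0 t0 := hp.mono0 halt.le
    have hpa' : (f a - mlow f a) + dh a + d0 a ≤ f a + ch a + c0 a := by
      have := hpa
      simp only [hX, hY, gammaUp_eq] at this
      exact this
    have : Y t0 ≤ X t0 := by
      simp only [hX, hY, gammaUp_eq]
      linarith
    linarith
  exact fun t => le_antisymm (hle1 t) (hle2 t)

lemma e0_flat (hf : Continuous f) (hf0 : f 0 = 0)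
    (hp : SkorohodPair h f c0 ch) (hq : SkorohodPair h (gammaUp f) d0 dh)
    (hxy : ∀ t, f t + ch t + c0 t = gammaUp f t + dh t + d0 t) :
    ∀ a b : ℝ≥0, a ≤ b → (∀ u ∈ Icc a b, f u + ch u + c0 u ≠ 0) →
      d0 b - mlow f b = d0 a - mlow f a := by
  intro a b hab hne
  have hd0 : d0 b = d0 a := hq.flat0 a b hab (fun u hu => by rw [← hxy u]; exact hne u hu)
  have hm : mlow f b = mlow f a := by
    rcases eq_or_lt_of_le (mlow_anti hf hab) with he | hlt
    · exact he
    · exfalso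
      obtain ⟨u, hau, hub, hgu⟩ := exists_gammaUp_zero hf hab hlt
      have hyu : gammaUp f u + dh u + d0 u ≤ 0 := by
        have := dhd0_nonpos hf hf0 hq u
        rw [hgu]; linarith
      have hxu : 0 ≤ f u + ch u + c0 u := (hp.mem_Icc u).1
      have : f u + ch u + c0 u = 0 := le_antisymm (by rw [hxy u]; exact hyu) hxu
      exact hne u ⟨hau.le, hub⟩ this
  rw [hd0, hm]

lemma sup_closure_hit {X : ℝ≥0 → ℝ} (hX : Continuous X) (h : ℝ) {tst : ℝ≥0} (h0 : 0 < tst)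
    (claim : ∀ t, t < tst → ∃ u, t ≤ u ∧ u ≤ tst ∧ X u = h) : X tst = h := by
  set S : Set ℝ≥0 := Icc 0 tst ∩ {u | X u = h} with hS
  have hbdd : BddAbove S := ⟨tst, fun x hx => hx.1.2⟩
  have hne : S.Nonempty := by
    obtain ⟨u, _, hu2, hu3⟩ := claim 0 h0
    exact ⟨u, ⟨(zero_le : (0:ℝ≥0) ≤ u), hu2⟩, hu3⟩
  have hb := (isClosed_Icc.inter (isClosed_eq hX continuous_const)).csSup_mem hne hbdd
  have hbt : sSup S ≤ tst := csSup_le hne (fun x hx => hx.1.2)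
  rcases eq_or_lt_of_le hbt with he | hlt
  · rw [← he]; exact hb.2
  · exfalso
    obtain ⟨c, hbc, hct⟩ := exists_between hlt
    obtain ⟨u, hcu, hut, hXu⟩ := claim c hct
    have : u ≤ sSup S := le_csSup hbdd ⟨⟨(zero_le : (0:ℝ≥0) ≤ u), hut⟩, hXu⟩
    exact absurd (lt_of_lt_of_le hbc (le_trans hcu this)) (lt_irrefl _)

lemma descent_aux (hh : 0 < h) (hf : Continuous f) (hf0 : f 0 = 0)
    (hp : SkorohodPair h f c0 ch) (hq : SkorohodPair h (gammaUp f) d0 dh)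
    (hxy : ∀ t, f t + ch t + c0 t = gammaUp f t + dh t + d0 t)
    {tst : ℝ≥0} (hXts : f tst + ch tst + c0 tst = h) :
    ∃ w, w < tst ∧ ch w - dh w = ch tst - dh tst := by
  have hgam : ∀ t, ch t - dh t = (d0 t - mlow f t) - c0 t := by
    intro t
    have := hxy t
    rw [gammaUp_eq] at this
    linarith
  obtain ⟨w, hwt, hXw, hwmax⟩ := last_time (p := fun t => f t + ch t + c0 t = 0)
    (isClosed_eq ((hf.add hp.conth).add hp.cont0) continuous_const) tst
    (by show f 0 + ch 0 + c0 0 = 0; rw [hf0, hp.inith, hp.init0]; ring)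
  have hwlt : w < tst := by
    refine lt_of_le_of_ne hwt ?_
    rintro rfl
    exact hh.ne' ((hXw.symm.trans hXts).symm)
  have hne' : ∀ t, w < t → t ≤ tst → ∀ u ∈ Icc t tst, f u + ch u + c0 u ≠ 0 :=
    fun t h1 _ u hu => hwmax u (lt_of_lt_of_le h1 hu.1) hu.2
  have hc0w : c0 w = c0 tst :=
    eq_of_right_const c0 hp.cont0 hwlt (fun t h1 h2 => (hp.flat0 t tst h2 (hne' t h1 h2)).symm)
  have he0w : d0 w - mlow f w = d0 tst - mlow f tst := by
    apply eq_of_right_const (fun t => d0 t - mlow f t) (hq.cont0.sub (mlow_continuous hf)) hwlt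
    intro t h1 h2
    exact (e0_flat hf hf0 hp hq hxy t tst h2 (hne' t h1 h2)).symm
  have g1 := hgam w
  have g2 := hgam tst
  exact ⟨w, hwlt, by rw [g1, g2, hc0w, he0w]⟩

lemma dh_eq_ch (hh : 0 < h) (hf : Continuous f) (hf0 : f 0 = 0)
    (hp : SkorohodPair h f c0 ch) (hq : SkorohodPair h (gammaUp f) d0 dh)
    (hxy : ∀ t, f t + ch t + c0 t = gammaUp f t + dh t + d0 t) :
    ∀ t, dh t = ch t := by
  have F1 : ∀ t0, ch t0 - dh t0 ≤ 0 := by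
    intro t0
    by_contra hc
    push_neg at hc
    obtain ⟨ts, hts0, hpts, hmin⟩ := first_time (p := fun t => ch t0 - dh t0 ≤ ch t - dh t)
      (isClosed_le continuous_const (hp.conth.sub hq.conth)) t0 le_rfl
    have h0ts : 0 < ts := by
      rw [pos_iff_ne_zero]
      rintro rfl
      rw [hp.inith, hq.inith] at hpts
      linarith
    have hXts : f ts + ch ts + c0 ts = h := by
      apply sup_closure_hit ((hf.add hp.conth).add hp.cont0) h h0ts
      intro t htlt
      by_contra hcc
      push_neg at hcc
      have hdh_eq : dh ts = dh t := by
        apply hq.flath t ts htlt.le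
        intro u hu
        rw [← hxy u]
        exact hcc u hu.1 hu.2
      have hnp := hmin t htlt
      push_neg at hnp
      have hanti := hp.antih htlt.le
      linarith
    obtain ⟨w, hwlt, hgw⟩ := descent_aux hh hf hf0 hp hq hxy hXts
    have hnw := hmin w hwlt
    push_neg at hnw
    linarith
  have F2 : ∀ t0, dh t0 - ch t0 ≤ 0 := by
    intro t0
    by_contra hc
    push_neg at hc
    obtain ⟨ts, hts0, hpts, hmin⟩ := first_time (p := fun t => dh t0 - ch t0 ≤ dh t - ch t)
      (isClosed_le continuous_const (hq.conth.sub hp.conth)) t0 le_rfl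
    have h0ts : 0 < ts := by
      rw [pos_iff_ne_zero]
      rintro rfl
      rw [hp.inith, hq.inith] at hpts
      linarith
    have hXts : f ts + ch ts + c0 ts = h := by
      apply sup_closure_hit ((hf.add hp.conth).add hp.cont0) h h0ts
      intro t htlt
      by_contra hcc
      push_neg at hcc
      have hch_eq : ch ts = ch t := hp.flath t ts htlt.le (fun u hu => hcc u hu.1 hu.2)
      have hnp := hmin t htlt
      push_neg at hnp
      have hanti := hq.antih htlt.le
      linarith
    obtain ⟨w, hwlt, hgw⟩ := descent_aux hh hf hf0 hp hq hxy hXts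
    have hnw := hmin w hwlt
    push_neg at hnw
    linarith
  intro t
  have := F1 t
  have := F2 t
  linarith

end Main

end SkorohodAux

/-- **Reflection invariance** (Lemma `reflection-inv`): the two-sided Skorohod reflections on
`[0,h]` of `f` and of its one-sided reflection `Γ⁰(f)` coincide, and the upper compensators
agree: `cʰ(Γ⁰(f)) = cʰ(f)`.  Here `(c0, ch)` are the compensators of `f` and `(d0, dh)` those
of `Γ⁰(f)`. -/
theorem skorohod_of_one_sided_reflection
    (h : ℝ) (hh : 0 < h) (f : ℝ≥0 → ℝ) (hf : Continuous f) (hf0 : f 0 = 0)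
    (c0 ch d0 dh : ℝ≥0 → ℝ)
    (hp : SkorohodPair h f c0 ch)
    (hq : SkorohodPair h (gammaUp f) d0 dh) :
    (∀ t, f t + ch t + c0 t = gammaUp f t + dh t + d0 t) ∧ dh = ch := by
  have hxy := SkorohodAux.reflected_eq hh hf hf0 hp hq
  exact ⟨hxy, funext (SkorohodAux.dh_eq_ch hh hf hf0 hp hq hxy)⟩
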